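/- Let A be Hermitian and f a real-valued filter function with f(λ_k) ≠ 0 for the m₀ eigenvalues of largest |f|-value, which are assumed strictly larger in magnitude than |f(λ_{m₀+1})|. If a subspace X of dimension m₀ has nonzero projection onto each of the top-m₀ eigenvectors, then the subspace f(A)^j X converges to the span of the top-m₀ eigenvectors of f(A), with the angle to that invariant subspace bounded by C·(|f(λ_{m₀+1})|/|f(λ_{m₀})|)^j for some constant C independent of j. -/

import Mathlib

open Matrix Finset
set_option maxRecDepth 4000
local notation "⟪" x ", " y "⟫" => @inner ℂ _ _ x y



lemma diag_step {n : ℕ} (b : OrthonormalBasis (Fin n) ℂ (EuclideanSpace ℂ (Fin n)))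
    (g : Fin n → ℂ) (M : Matrix (Fin n) (Fin n) ℂ)
    (hM : M = ∑ k, g k • Matrix.vecMulVec (fun i => b k i) (fun j => star (b k j)))
    (y : EuclideanSpace ℂ (Fin n)) (l : Fin n) :
    b.repr (Matrix.toEuclideanLin M y) l = g l * b.repr y l := by
  have horth : ∀ k, (∑ i, (starRingEnd ℂ) (b l i) * b k i) = if l = k then 1 else 0 := by
    intro k
    have h := b.orthonormal
    rw [orthonormal_iff_ite] at h
    simpa [PiLp.inner_apply, RCLike.inner_apply, mul_comm] using h l k
  set S : Fin n → ℂ := fun k => ∑ j, (starRingEnd ℂ) (b k j) * y j with hS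
  have hMv : ∀ i, (M *ᵥ (WithLp.equiv 2 (Fin n → ℂ)) y) i = ∑ k, (g k * S k) * b k i := by
    intro i
    have hent : ∀ i j, M i j = ∑ k, g k * (b k i * star (b k j)) := by
      intro i j; rw [hM]; simp [Matrix.sum_apply, Matrix.vecMulVec_apply]
    have hrfl : (M *ᵥ (WithLp.equiv 2 (Fin n → ℂ)) y) i = ∑ j, M i j * y j := rfl
    rw [hrfl]
    simp only [hent, Finset.sum_mul]
    rw [Finset.sum_comm]
    refine Finset.sum_congr rfl fun k _ => ?_
    rw [hS, Finset.mul_sum, Finset.sum_mul]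
    refine Finset.sum_congr rfl fun j _ => ?_
    rw [starRingEnd_apply]
    ring
  rw [OrthonormalBasis.repr_apply_apply, OrthonormalBasis.repr_apply_apply]
  simp only [Matrix.toEuclideanLin_apply, PiLp.inner_apply, RCLike.inner_apply]
  rw [show (∑ x, (M *ᵥ y.ofLp) x * (starRingEnd ℂ) ((b l).ofLp x)) = ∑ i, (starRingEnd ℂ) (b l i) * (M *ᵥ (WithLp.equiv 2 (Fin n → ℂ)) y) i from Finset.sum_congr rfl fun i _ => mul_comm _ _,
    show (∑ x, y.ofLp x * (starRingEnd ℂ) ((b l).ofLp x)) = S l from Finset.sum_congr rfl fun i _ => mul_comm _ _]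
  calc (∑ i, (starRingEnd ℂ) (b l i) * (M *ᵥ (WithLp.equiv 2 (Fin n → ℂ)) y) i)
      = ∑ i, ∑ k, (g k * S k) * ((starRingEnd ℂ) (b l i) * b k i) := by
        refine Finset.sum_congr rfl fun i _ => ?_
        rw [hMv i, Finset.mul_sum]
        exact Finset.sum_congr rfl fun k _ => by ring
    _ = ∑ k, (g k * S k) * ∑ i, (starRingEnd ℂ) (b l i) * b k i := by
        rw [Finset.sum_comm]
        exact Finset.sum_congr rfl fun k _ => (Finset.mul_sum _ _ _).symm
    _ = g l * S l := by simp [horth]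



lemma diag_pow {n : ℕ} (b : OrthonormalBasis (Fin n) ℂ (EuclideanSpace ℂ (Fin n)))
    (g : Fin n → ℂ) (M : Matrix (Fin n) (Fin n) ℂ)
    (hM : M = ∑ k, g k • Matrix.vecMulVec (fun i => b k i) (fun j => star (b k j)))
    (j : ℕ) (y : EuclideanSpace ℂ (Fin n)) (l : Fin n) :
    b.repr (Matrix.toEuclideanLin (M ^ j) y) l = g l ^ j * b.repr y l := by
  induction j with
  | zero =>
    have h1 : Matrix.toEuclideanLin (M ^ 0) y = y := by
      rw [pow_zero]
      refine PiLp.ext fun i => ?_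
      simp [Matrix.toEuclideanLin_apply, Matrix.one_mulVec]
    rw [h1, pow_zero, one_mul]
  | succ j ih =>
    have hmul : Matrix.toEuclideanLin (M ^ (j+1)) y
        = Matrix.toEuclideanLin M (Matrix.toEuclideanLin (M ^ j) y) := by
      rw [pow_succ']
      refine PiLp.ext fun i => ?_
      simp [Matrix.toEuclideanLin_apply, Matrix.mulVec_mulVec, Equiv.apply_symm_apply]
    rw [hmul, diag_step b g M hM, ih, pow_succ']
    ring
lemma euclid_sum_apply {n : ℕ} {ι : Type*} (s : Finset ι)
    (y : ι → EuclideanSpace ℂ (Fin n)) (l : Fin n) :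
    (∑ k ∈ s, y k) l = ∑ k ∈ s, y k l := by
  induction s using Finset.cons_induction with
  | empty => rfl
  | cons a s ha ih => rw [Finset.sum_cons, Finset.sum_cons, ← ih]; rfl




open Matrix

/-- Convergence of filtered subspace iteration: if the `m₀` eigenvalues of largest
`|f|`-value are nonzero under `f` and strictly dominate `|f(λ_{m₀+1})|`, and the initial
`m₀`-dimensional subspace `X` has trivial intersection with the orthogonal complement of
the span of the top `m₀` eigenvectors, then the subspaces `f(A)^j X` converge to that
span: the (sine of the largest principal) angle—measured by the distance from unit
vectors of the iterate to the target subspace—is bounded by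
`C · (|f(λ_{m₀+1})|/|f(λ_{m₀})|)^j` with `C` independent of `j`. -/
theorem stmt_9 {n m₀ : ℕ} (A : Matrix (Fin n) (Fin n) ℂ) (hA : A.IsHermitian)
    (f : ℝ → ℝ) (hm : m₀ < n) (hm0 : 0 < m₀)
    (hord : ∀ j k : Fin n, j ≤ k → |f (hA.eigenvalues k)| ≤ |f (hA.eigenvalues j)|)
    (hgap : |f (hA.eigenvalues ⟨m₀, hm⟩)| < |f (hA.eigenvalues ⟨m₀ - 1, by omega⟩)|)
    (hnz : ∀ k : Fin n, (k : ℕ) < m₀ → f (hA.eigenvalues k) ≠ 0)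
    (fA : Matrix (Fin n) (Fin n) ℂ)
    (hfA : fA = ∑ k, (f (hA.eigenvalues k) : ℂ) •
      Matrix.vecMulVec (fun i => hA.eigenvectorBasis k i)
        (fun j => star (hA.eigenvectorBasis k j)))
    (U : Submodule ℂ (EuclideanSpace ℂ (Fin n)))
    (hU : U = Submodule.span ℂ {v | ∃ k : Fin n, (k : ℕ) < m₀ ∧ v = hA.eigenvectorBasis k})
    (X : Submodule ℂ (EuclideanSpace ℂ (Fin n)))
    (hXdim : Module.finrank ℂ X = m₀) (hXU : X ⊓ Uᗮ = ⊥) :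
    ∃ C : ℝ, ∀ j : ℕ, ∀ v ∈ X.map (Matrix.toEuclideanLin (fA ^ j)),
      ‖v‖ = 1 → Metric.infDist v (U : Set (EuclideanSpace ℂ (Fin n))) ≤
        C * (|f (hA.eigenvalues ⟨m₀, hm⟩)| / |f (hA.eigenvalues ⟨m₀ - 1, by omega⟩)|) ^ j := by
  classical
  have key : ∀ (j : ℕ) (y : EuclideanSpace ℂ (Fin n)) (k : Fin n),
      (hA.eigenvectorBasis).repr (Matrix.toEuclideanLin (fA ^ j) y) k
        = (f (hA.eigenvalues k) : ℂ) ^ j * (hA.eigenvectorBasis).repr y k :=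
    diag_pow hA.eigenvectorBasis (fun k => (f (hA.eigenvalues k) : ℂ)) fA hfA
  set b := hA.eigenvectorBasis with hb
  set lam : Fin n → ℝ := fun k => |f (hA.eigenvalues k)| with hlam
  set τ : ℝ := lam ⟨m₀, hm⟩ with hτ
  set σ : ℝ := lam ⟨m₀ - 1, by omega⟩ with hσ
  have hτσ : τ < σ := hgap
  have hτ0 : (0:ℝ) ≤ τ := abs_nonneg _
  have hσ0 : (0:ℝ) < σ := lt_of_le_of_lt hτ0 hτσ
  have hgnorm : ∀ k, ‖((f (hA.eigenvalues k)) : ℂ)‖ = lam k := fun k => by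
    simp [hlam, Complex.norm_real, Real.norm_eq_abs]
  set S : Finset (Fin n) := Finset.univ.filter (fun k => (k : ℕ) < m₀) with hSdef
  have hbU : ∀ k ∈ S, b k ∈ U := by
    intro k hk
    rw [hU]
    exact Submodule.subset_span ⟨k, by simpa [hSdef] using hk, rfl⟩
  have hup : ∀ k, k ∉ S → lam k ≤ τ := by
    intro k hk
    refine hord ⟨m₀, hm⟩ k ?_
    simp only [hSdef, Finset.mem_filter, Finset.mem_univ, true_and, not_lt] at hk
    exact hk
  have hlow : ∀ k, k ∈ S → σ ≤ lam k := by
    intro k hk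
    refine hord k ⟨m₀ - 1, by omega⟩ ?_
    simp only [hSdef, Finset.mem_filter, Finset.mem_univ, true_and] at hk
    exact Fin.le_def.mpr (show (k:ℕ) ≤ m₀ - 1 by omega)
  -- the projection onto U as a linear map
  let P : EuclideanSpace ℂ (Fin n) →ₗ[ℂ] EuclideanSpace ℂ (Fin n) :=
    { toFun := fun x => ∑ k ∈ S, b.repr x k • b k
      map_add' := fun x y => by
        rw [← Finset.sum_add_distrib]
        refine Finset.sum_congr rfl fun k _ => ?_
        rw [map_add]
        show (b.repr x k + b.repr y k) • b k = _
        rw [add_smul]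
      map_smul' := fun c x => by
        show ∑ k ∈ S, b.repr (c • x) k • b k = c • ∑ k ∈ S, b.repr x k • b k
        rw [Finset.smul_sum]
        refine Finset.sum_congr rfl fun k _ => ?_
        have h : b.repr (c • x) k = c * b.repr x k := by
          rw [LinearIsometryEquiv.map_smul]; rfl
        rw [h, mul_smul] }
  have hPapp : ∀ x, P x = ∑ k ∈ S, b.repr x k • b k := fun _ => rfl
  have hPcoeff : ∀ x l, b.repr (P x) l = if l ∈ S then b.repr x l else 0 := by
    intro x l
    rw [hPapp, map_sum, euclid_sum_apply]
    have : ∀ k ∈ S, (b.repr (b.repr x k • b k)) l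
        = if l = k then b.repr x k else 0 := by
      intro k _
      rw [LinearIsometryEquiv.map_smul]
      show b.repr x k • (b.repr (b k)) l = _
      rw [OrthonormalBasis.repr_self]
      simp [EuclideanSpace.single_apply, smul_eq_mul, mul_ite]
    rw [Finset.sum_congr rfl this, Finset.sum_ite_eq]
  have hPmem : ∀ x, P x ∈ U := fun x =>
    Submodule.sum_mem _ fun k hk => Submodule.smul_mem _ _ (hbU k hk)
  -- injectivity of P on X
  have hker : LinearMap.ker (P.comp X.subtype) = ⊥ := by
    rw [eq_bot_iff]
    rintro ⟨w, hw⟩ hk0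
    simp only [LinearMap.mem_ker, LinearMap.comp_apply, Submodule.subtype_apply] at hk0
    have hcoeff : ∀ k ∈ S, b.repr w k = 0 := by
      intro k hk
      have h := hPcoeff w k
      rw [hk0] at h
      simp only [map_zero, if_pos hk] at h
      exact h.symm
    have hwperp : w ∈ Uᗮ := by
      rw [hU, Submodule.mem_orthogonal]
      intro u hu
      induction hu using Submodule.span_induction with
      | mem u hu =>
        obtain ⟨k, hk, rfl⟩ := hu
        have hkS : k ∈ S := by simp [hSdef, hk]
        rw [← OrthonormalBasis.repr_apply_apply]
        exact hcoeff k hkS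
      | zero => simp
      | add u v _ _ hu hv => rw [inner_add_left, hu, hv, add_zero]
      | smul c u _ hu => rw [inner_smul_left, hu, mul_zero]
    have hmem : w ∈ X ⊓ Uᗮ := ⟨hw, hwperp⟩
    rw [hXU, Submodule.mem_bot] at hmem
    simpa [Submodule.mk_eq_zero] using hmem
  obtain ⟨K, hK0, hKlip⟩ := LinearMap.exists_antilipschitzWith (P.comp X.subtype) hker
  have hKb : ∀ w, (hw : w ∈ X) → ‖w‖ ≤ K * ‖P w‖ := by
    intro w hw
    have h := hKlip.le_mul_dist ⟨w, hw⟩ 0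
    simpa [dist_eq_norm] using h
  -- norm-squared formula
  have hnormsq : ∀ x : EuclideanSpace ℂ (Fin n), ‖x‖^2 = ∑ k, ‖b.repr x k‖^2 := by
    intro x
    rw [← b.repr.norm_map x]
    exact PiLp.norm_sq_eq_of_L2 _ _
  have sqrt_le : ∀ a c : ℝ, 0 ≤ a → 0 ≤ c → a^2 ≤ c^2 → a ≤ c := by
    intro a c ha hc h; nlinarith
  refine ⟨K, fun j v hv hv1 => ?_⟩
  obtain ⟨w, hw, rfl⟩ := Submodule.mem_map.mp hv
  set v := Matrix.toEuclideanLin (fA ^ j) w with hvdef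
  -- upper bound for the residual
  have hsub : ∀ k, b.repr (v - P v) k
      = if k ∈ S then 0 else (f (hA.eigenvalues k) : ℂ) ^ j * b.repr w k := by
    intro k
    rw [map_sub]
    show b.repr v k - b.repr (P v) k = _
    rw [hPcoeff, key j w k]
    by_cases hk : k ∈ S <;> simp [hk]
  have h1 : ‖v - P v‖^2 ≤ (τ^j * ‖w‖)^2 := by
    rw [hnormsq, mul_pow, hnormsq w, Finset.mul_sum]
    refine Finset.sum_le_sum fun k _ => ?_
    rw [hsub]
    by_cases hk : k ∈ S
    · rw [if_pos hk, norm_zero]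
      have h0 : (0:ℝ)^2 = 0 := by norm_num
      rw [h0]
      positivity
    · simp only [if_neg hk, norm_mul, norm_pow, hgnorm, mul_pow]
      have : lam k ^ j ≤ τ ^ j := pow_le_pow_left₀ (abs_nonneg _) (hup k hk) j
      have h2 : (lam k ^ j)^2 ≤ (τ^j)^2 :=
        pow_le_pow_left₀ (by positivity) this 2
      exact mul_le_mul_of_nonneg_right h2 (by positivity)
  -- lower bound for the iterate
  have h2 : (σ^j * ‖P w‖)^2 ≤ ‖v‖^2 := by
    rw [hnormsq, mul_pow, hnormsq (P w), Finset.mul_sum]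
    refine Finset.sum_le_sum fun k _ => ?_
    rw [hPcoeff, key j w k]
    by_cases hk : k ∈ S
    · simp only [if_pos hk, norm_mul, norm_pow, hgnorm, mul_pow]
      have : σ ^ j ≤ lam k ^ j := pow_le_pow_left₀ (le_of_lt hσ0) (hlow k hk) j
      have h3 : (σ^j)^2 ≤ (lam k ^ j)^2 := pow_le_pow_left₀ (by positivity) this 2
      exact mul_le_mul_of_nonneg_right h3 (by positivity)
    · rw [if_neg hk, norm_zero]
      have h0 : (0:ℝ)^2 = 0 := by norm_num
      rw [h0, mul_zero]
      positivity
  rw [hv1] at h2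
  have hPwle : ‖P w‖ ≤ (σ^j)⁻¹ := by
    have hσj : (0:ℝ) < σ^j := by positivity
    have := sqrt_le (σ^j * ‖P w‖) 1 (by positivity) zero_le_one (by simpa using h2)
    rw [← le_div_iff₀' hσj] at this
    simpa [one_div] using this
  calc Metric.infDist v (U : Set (EuclideanSpace ℂ (Fin n)))
      ≤ dist v (P v) := Metric.infDist_le_dist_of_mem (hPmem v)
    _ = ‖v - P v‖ := dist_eq_norm _ _
    _ ≤ τ^j * ‖w‖ := sqrt_le _ _ (norm_nonneg _) (by positivity) h1
    _ ≤ τ^j * (K * ‖P w‖) := by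
        refine mul_le_mul_of_nonneg_left (hKb w hw) (by positivity)
    _ ≤ τ^j * (K * (σ^j)⁻¹) := by
        refine mul_le_mul_of_nonneg_left ?_ (by positivity)
        exact mul_le_mul_of_nonneg_left hPwle (by positivity)
    _ = K * (τ / σ)^j := by
        rw [div_pow]
        field_simp
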